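/- Let $\mathcal{K}$ be a simplicial complex on the vertex set $J' \supseteq J$, let $\mathbf{k}$ be a field, and let $\alpha \in \mathbb{Z}_{\geq 0}^{J'}$ be a multidegree with $\alpha_i = 0$ for all $i \notin J$. Then for all $n \geq 0$ there is an isomorphism of multigraded Tor groups $\mathrm{Tor}^{\mathbf{k}[\mathcal{K}]}_{n, 2\alpha}(\mathbf{k},\mathbf{k}) \cong \mathrm{Tor}^{\mathbf{k}[\mathcal{K}_J]}_{n, 2\alpha}(\mathbf{k},\mathbf{k})$, where $\mathcal{K}_J$ is the full subcomplex of $\mathcal{K}$ on $J$. -/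

import Mathlib

/-- `K` is an abstract simplicial complex on the vertex type `V`. -/
def IsComplexOn {V : Type} (K : Set (Finset V)) : Prop :=
  ∅ ∈ K ∧ ∀ s ∈ K, ∀ t, t ⊆ s → t ∈ K

/-- Merge the entries in positions `i` and `i + 1` of a list (used to define the bar
differential via multiplication of adjacent monomials, recorded additively on
exponent vectors). -/
def mergeList {M : Type} [Add M] : ℕ → List M → List M
  | 0, a :: b :: l => (a + b) :: l
  | i + 1, a :: l => a :: mergeList i l
  | _, l => l

/-- The basis of the multidegree-`α` component of the `n`-th term of the reduced bar
construction of the Stanley--Reisner ring `k[K]`: lists of `n` nonzero monomials (exponent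
vectors) whose supports are faces of `K` and whose multidegrees sum to `α`.  (A monomial
of multidegree `β` has internal degree `2β` in `k[K]`; we record half the internal
multidegree throughout.) -/
def BarBasis {V : Type} (K : Set (Finset V)) (α : V →₀ ℕ) (n : ℕ) : Type :=
  { l : List (V →₀ ℕ) //
      l.length = n ∧ (∀ m ∈ l, m ≠ 0 ∧ m.support ∈ K) ∧ l.sum = α }

/-- The multidegree-`α` component of the `n`-th term of the reduced bar construction. -/
abbrev BarChains (k : Type) [Field k] {V : Type} (K : Set (Finset V)) (α : V →₀ ℕ)
    (n : ℕ) : Type :=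
  BarBasis K α n →₀ k

open Classical in
/-- Send a list to the corresponding basis element if it is admissible, and to `0`
otherwise (monomials whose support is not a face vanish in `k[K]`). -/
noncomputable def barProj (k : Type) [Field k] {V : Type} (K : Set (Finset V))
    (α : V →₀ ℕ) (n : ℕ) (l : List (V →₀ ℕ)) : BarChains k K α n :=
  if h : l.length = n ∧ (∀ m ∈ l, m ≠ 0 ∧ m.support ∈ K) ∧ l.sum = α then
    Finsupp.single ⟨l, h⟩ 1
  else 0

/-- The bar differential `d : B_{n+1} → B_n` in multidegree `α`. -/
noncomputable def barD (k : Type) [Field k] {V : Type} (K : Set (Finset V))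
    (α : V →₀ ℕ) (n : ℕ) :
    BarChains k K α (n + 1) →ₗ[k] BarChains k K α n :=
  Finsupp.lift (BarChains k K α n) k (BarBasis K α (n + 1)) fun l =>
    ∑ i ∈ Finset.range n, ((-1 : k) ^ (i + 1)) • barProj k K α n (mergeList i l.1)

/-- The cycles of the bar complex. -/
noncomputable def barCycles (k : Type) [Field k] {V : Type} (K : Set (Finset V))
    (α : V →₀ ℕ) : (n : ℕ) → Submodule k (BarChains k K α n)
  | 0 => ⊤
  | n + 1 => LinearMap.ker (barD k K α n)


/-- Quotient instance for homology of the bar complex. -/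
noncomputable instance barQuot (k : Type) [Field k] {V : Type} (K : Set (Finset V))
    (α : V →₀ ℕ) (n : ℕ) :
    HasQuotient (↥(barCycles k K α n)) (Submodule k ↥(barCycles k K α n)) :=
  Submodule.hasQuotient (R := k) (M := ↥(barCycles k K α n))

/-- The multigraded Tor group `Tor^{k[K]}_{n,2α}(k,k)`, computed as the homology of the
multidegree-`α` component of the reduced bar construction of `k[K]`. -/
abbrev TorSR (k : Type) [Field k] {V : Type} (K : Set (Finset V)) (α : V →₀ ℕ)
    (n : ℕ) : Type :=
  ↥(barCycles k K α n) ⧸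
    Submodule.comap (barCycles k K α n).subtype (LinearMap.range (barD k K α n))

section Aux

variable {V : Type} (k : Type) [Field k] (K K' : Set (Finset V)) (α : V →₀ ℕ)
variable {K K' α} in
lemma barCond_iff (H : ∀ m : V →₀ ℕ, m ≤ α → (m.support ∈ K ↔ m.support ∈ K')) (l : List (V →₀ ℕ)) (n : ℕ) :
    (l.length = n ∧ (∀ m ∈ l, m ≠ 0 ∧ m.support ∈ K) ∧ l.sum = α) ↔
    (l.length = n ∧ (∀ m ∈ l, m ≠ 0 ∧ m.support ∈ K') ∧ l.sum = α) := by
  constructor <;> rintro ⟨h1, h2, h3⟩ <;> refine ⟨h1, fun m hm => ?_, h3⟩ <;>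
    obtain ⟨hm0, hmK⟩ := h2 m hm
  · exact ⟨hm0, (H m (h3 ▸ List.single_le_sum (fun x _ => zero_le) _ hm)).mp hmK⟩
  · exact ⟨hm0, (H m (h3 ▸ List.single_le_sum (fun x _ => zero_le) _ hm)).mpr hmK⟩

variable {K K' α} in
noncomputable def barBasisEquiv (H : ∀ m : V →₀ ℕ, m ≤ α → (m.support ∈ K ↔ m.support ∈ K')) (n : ℕ) : BarBasis K α n ≃ BarBasis K' α n :=
  Equiv.subtypeEquivRight (fun l => barCond_iff H l n)

variable {K K' α} in
noncomputable def barChainsEquiv (H : ∀ m : V →₀ ℕ, m ≤ α → (m.support ∈ K ↔ m.support ∈ K')) (n : ℕ) :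
    BarChains k K α n ≃ₗ[k] BarChains k K' α n :=
  Finsupp.domLCongr (barBasisEquiv H n)

variable {K K' α} in
lemma barChainsEquiv_barProj (H : ∀ m : V →₀ ℕ, m ≤ α → (m.support ∈ K ↔ m.support ∈ K')) (n : ℕ) (l : List (V →₀ ℕ)) :
    barChainsEquiv k H n (barProj k K α n l) = barProj k K' α n l := by
  unfold barProj
  by_cases h : l.length = n ∧ (∀ m ∈ l, m ≠ 0 ∧ m.support ∈ K) ∧ l.sum = α
  · have h' := (barCond_iff H l n).mp h
    rw [dif_pos h, dif_pos h']
    exact Finsupp.domLCongr_single (R := k) (M := k) (barBasisEquiv H n) (⟨l, h⟩ : BarBasis K α n) 1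
  · have h' : ¬(l.length = n ∧ (∀ m ∈ l, m ≠ 0 ∧ m.support ∈ K') ∧ l.sum = α) :=
      fun hc => h ((barCond_iff H l n).mpr hc)
    rw [dif_neg h, dif_neg h']
    exact map_zero _

variable {K K' α} in
lemma barChainsEquiv_barD (H : ∀ m : V →₀ ℕ, m ≤ α → (m.support ∈ K ↔ m.support ∈ K')) (n : ℕ) (x : BarChains k K α (n + 1)) :
    barChainsEquiv k H n (barD k K α n x) =
      barD k K' α n (barChainsEquiv k H (n + 1) x) := by
  induction x using Finsupp.induction_linear with
  | zero => simp
  | add f g hf hg => simp [map_add, hf, hg]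
  | single b c =>
    have hb : Finsupp.single b c = c • Finsupp.single b (1 : k) := by
      rw [Finsupp.smul_single, smul_eq_mul, mul_one]
    rw [hb, map_smul, map_smul, map_smul, map_smul]
    congr 1
    have h1 : barD k K α n (Finsupp.single b 1) =
        ∑ i ∈ Finset.range n, ((-1 : k) ^ (i + 1)) • barProj k K α n (mergeList i b.1) := by
      simp [barD, Finsupp.lift_apply, Finsupp.sum_single_index]
    have h2 : barChainsEquiv k H (n + 1) (Finsupp.single b 1) =
        Finsupp.single (barBasisEquiv H (n + 1) b) 1 := by
      simp [barChainsEquiv]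
    rw [h1, h2, map_sum]
    have h3 : barD k K' α n (Finsupp.single (barBasisEquiv H (n + 1) b) 1) =
        ∑ i ∈ Finset.range n, ((-1 : k) ^ (i + 1)) •
          barProj k K' α n (mergeList i ((barBasisEquiv H (n + 1) b).1)) := by
      simp [barD, Finsupp.lift_apply, Finsupp.sum_single_index]
    rw [h3]
    refine Finset.sum_congr rfl fun i _ => ?_
    rw [map_smul, barChainsEquiv_barProj]
    rfl

end Aux

section Aux2

variable {V : Type} (k : Type) [Field k] {K K' : Set (Finset V)} {α : V →₀ ℕ}
  (H : ∀ m : V →₀ ℕ, m ≤ α → (m.support ∈ K ↔ m.support ∈ K'))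

lemma barChainsEquiv_map_cycles (n : ℕ) :
    (barCycles k K α n).map (barChainsEquiv k H n).toLinearMap = barCycles k K' α n := by
  cases n with
  | zero =>
    simp [barCycles, Submodule.map_top, LinearEquiv.range]
  | succ n =>
    ext y
    simp only [barCycles, Submodule.mem_map, LinearMap.mem_ker, LinearEquiv.coe_coe]
    constructor
    · rintro ⟨x, hx, rfl⟩
      rw [← barChainsEquiv_barD k H n x, hx, map_zero]
    · intro hy
      refine ⟨(barChainsEquiv k H (n + 1)).symm y, ?_, (barChainsEquiv k H (n + 1)).apply_symm_apply y⟩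
      have := barChainsEquiv_barD k H n ((barChainsEquiv k H (n + 1)).symm y)
      rw [(barChainsEquiv k H (n + 1)).apply_symm_apply y, hy] at this
      exact (map_eq_zero_iff _ (barChainsEquiv k H n).injective).mp this

lemma barChainsEquiv_map_range (n : ℕ) :
    (LinearMap.range (barD k K α n)).map (barChainsEquiv k H n).toLinearMap =
      LinearMap.range (barD k K' α n) := by
  ext y
  simp only [Submodule.mem_map, LinearMap.mem_range, LinearEquiv.coe_coe]
  constructor
  · rintro ⟨x, ⟨z, rfl⟩, rfl⟩
    exact ⟨barChainsEquiv k H (n + 1) z, (barChainsEquiv_barD k H n z).symm⟩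
  · rintro ⟨z, rfl⟩
    refine ⟨barD k K α n ((barChainsEquiv k H (n + 1)).symm z),
      ⟨_, rfl⟩, ?_⟩
    rw [barChainsEquiv_barD k H n, (barChainsEquiv k H (n + 1)).apply_symm_apply]

noncomputable def cyclesEquiv (n : ℕ) :
    ↥(barCycles k K α n) ≃ₗ[k] ↥(barCycles k K' α n) :=
  ((barChainsEquiv k H n).submoduleMap (barCycles k K α n)).trans
    (LinearEquiv.ofEq _ _ (barChainsEquiv_map_cycles k H n))

lemma cyclesEquiv_coe (n : ℕ) (x : ↥(barCycles k K α n)) :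
    ((cyclesEquiv k H n x : ↥(barCycles k K' α n)) : BarChains k K' α n) =
      barChainsEquiv k H n (x : BarChains k K α n) := rfl

noncomputable def torEquiv (n : ℕ) : TorSR k K α n ≃ₗ[k] TorSR k K' α n := by
  refine Submodule.Quotient.equiv _ _ (cyclesEquiv k H n) ?_
  ext y
  simp only [Submodule.mem_map, Submodule.mem_comap, Submodule.coe_subtype]
  constructor
  · rintro ⟨x, hx, rfl⟩
    rw [LinearEquiv.coe_coe, cyclesEquiv_coe, ← barChainsEquiv_map_range k H n]
    exact ⟨x, hx, rfl⟩
  · intro hy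
    refine ⟨(cyclesEquiv k H n).symm y, ?_, (cyclesEquiv k H n).apply_symm_apply y⟩
    rw [← barChainsEquiv_map_range k H n] at hy
    obtain ⟨x, hx, hxy⟩ := hy
    have : barChainsEquiv k H n (((cyclesEquiv k H n).symm y : ↥(barCycles k K α n)) :
        BarChains k K α n) = (y : BarChains k K' α n) := by
      rw [← cyclesEquiv_coe, (cyclesEquiv k H n).apply_symm_apply]
    have hx2 : x = (((cyclesEquiv k H n).symm y : ↥(barCycles k K α n)) : BarChains k K α n) :=
      (barChainsEquiv k H n).injective (hxy.trans this.symm)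
    exact hx2 ▸ hx

end Aux2


/-- Restriction of multigraded Tor to a full subcomplex: if `K` is a simplicial complex on
the vertex set `V ⊇ J` and `α` is a multidegree with `αᵢ = 0` for `i ∉ J`, then
`Tor^{k[K]}_{n,2α}(k,k) ≅ Tor^{k[K_J]}_{n,2α}(k,k)`, where `K_J = {s ∈ K | s ⊆ J}` is the
full subcomplex of `K` on `J`. -/
theorem stmt2 {V : Type} (K : Set (Finset V)) (hK : IsComplexOn K) (J : Set V)
    (k : Type) [Field k] (α : V →₀ ℕ) (hα : ∀ i ∉ J, α i = 0) (n : ℕ) :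
    Nonempty (TorSR k K α n ≃ₗ[k] TorSR k {s ∈ K | (s : Set V) ⊆ J} α n) := by
  refine ⟨torEquiv k (fun m hm => ?_) n⟩
  simp only [Set.mem_setOf_eq, iff_self_and]
  intro _ i hi
  simp only [Finset.coe_subset, Finset.mem_coe, Finsupp.mem_support_iff] at hi ⊢
  by_contra hiJ
  exact hi (Nat.le_zero.mp ((hα i hiJ) ▸ hm i))
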